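/- Iterated spanning (Corollary): if for each i = 2,…,n, C(S,t,k,u_{i−1}) = ∫₀^∞ w_i(k', k) C(S,t,k',u_i) dk' for all k > 0, and C(S,t,K,T) = ∫₀^∞ w(k₁)C(S,t,k₁,u₁)dk₁, then C(S,t,K,T) = Σ_{i=1}^{n−1} ∫_{K_{i,1}}^{K_{i,2}} w̃_i(k_i) C(S,t,k_i,u_i) dk_i + ∫₀^∞ w̃_n(k_n) C(S,t,k_n,u_n) dk_n, where w̃₁ = w and w̃_i(k_i) = ∫_{(0,K_{i−1,1})∪(K_{i−1,2},∞)} w̃_{i−1}(k_{i−1}) w_i(k_i,k_{i−1}) dk_{i−1} for i ≥ 2, assuming all functions are nonnegative and all iterated integrals finite. -/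

import Mathlib

open MeasureTheory Set

/-- Swap lemma: integrating the spanning relation over a subset `S` of strikes and
exchanging the order of integration. -/
lemma span_swap (S : Set ℝ) (hS : MeasurableSet S) (hsub : S ⊆ Ioi (0 : ℝ))
    (g Cn Cp : ℝ → ℝ) (W : ℝ → ℝ → ℝ)
    (hInt : Integrable (fun p : ℝ × ℝ => g p.1 * W p.2 p.1 * Cn p.2)
      ((volume : Measure (ℝ × ℝ)).restrict ((Ioi 0) ×ˢ (Ioi 0))))
    (hsp : ∀ k ∈ S, Cp k = ∫ k' in Ioi (0 : ℝ), W k' k * Cn k') :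
    ((∫ k in S, g k * Cp k) =
      ∫ k in Ioi (0 : ℝ), (∫ k' in S, g k' * W k k') * Cn k) ∧
    Integrable (fun k => (∫ k' in S, g k' * W k k') * Cn k)
      (volume.restrict (Ioi 0)) := by
  have hIntS : Integrable (fun p : ℝ × ℝ => g p.1 * W p.2 p.1 * Cn p.2)
      ((volume.restrict S).prod (volume.restrict (Ioi 0))) := by
    rw [Measure.prod_restrict, ← Measure.volume_eq_prod]
    exact hInt.mono_measure
      (Measure.restrict_mono (Set.prod_mono hsub subset_rfl) le_rfl)
  constructor
  · have h1 : (∫ k in S, g k * Cp k)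
        = ∫ k in S, ∫ k' in Ioi (0 : ℝ), g k * W k' k * Cn k' := by
      refine setIntegral_congr_fun hS fun k hk => ?_
      rw [hsp k hk, ← integral_const_mul]
      simp only [mul_assoc]
    rw [h1]
    have h2 := integral_integral_swap
      (f := fun k k' => g k * W k' k * Cn k')
      (μ := volume.restrict S) (ν := volume.restrict (Ioi 0)) hIntS
    rw [h2]
    refine setIntegral_congr_fun measurableSet_Ioi fun k _ => ?_
    rw [← integral_mul_const]
  · have := hIntS.integral_prod_right
    have heq : (fun y => ∫ x in S, g x * W y x * Cn y)
        = fun y => (∫ x in S, g x * W y x) * Cn y := by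
      funext y; rw [← integral_mul_const]
    rwa [heq] at this

/-- Splitting an integral over `(0, ∞)` into `(0, a)`, `(a, b]` and `(b, ∞)`. -/
lemma split3 (a b : ℝ) (ha : 0 < a) (hab : a ≤ b) (f : ℝ → ℝ)
    (hf : IntegrableOn f (Ioi 0)) :
    (∫ k in Ioi (0 : ℝ), f k)
      = ((∫ k in Ioo (0 : ℝ) a, f k) + ∫ k in Ioc a b, f k) + ∫ k in Ioi b, f k := by
  have hIocb : Ioc (0 : ℝ) b ⊆ Ioi 0 := Ioc_subset_Ioi_self
  have h1 : (∫ k in Ioi (0 : ℝ), f k)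
      = (∫ k in Ioc (0 : ℝ) b, f k) + ∫ k in Ioi b, f k := by
    rw [← setIntegral_union (Ioc_disjoint_Ioi le_rfl) measurableSet_Ioi
      (hf.mono_set hIocb) (hf.mono_set (Ioi_subset_Ioi (ha.le.trans hab))),
      Ioc_union_Ioi_eq_Ioi (ha.le.trans hab)]
  have h2 : (∫ k in Ioc (0 : ℝ) b, f k)
      = (∫ k in Ioc (0 : ℝ) a, f k) + ∫ k in Ioc a b, f k := by
    rw [← setIntegral_union (Ioc_disjoint_Ioc_of_le le_rfl) measurableSet_Ioc
      (hf.mono_set Ioc_subset_Ioi_self)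
      (hf.mono_set fun x hx => lt_trans ha hx.1),
      Ioc_union_Ioc_eq_Ioc ha.le hab]
  rw [h1, h2, integral_Ioc_eq_integral_Ioo]

/-- **Iterated multi-maturity spanning (Corollary).** Maturities `u₁ > u₂ > … > u_n` are
indexed by `i = 1, …, n`; `Cu i k` is the time-`t` price of the call with strike `k` and
maturity `u_i`, `CT` the target call price. If each maturity-`u_{i-1}` call is spanned by
maturity-`u_i` calls with weights `wstep i`, and the target is spanned by maturity-`u₁`
calls with weight `w`, then with modified weights `wt` (with `wt 1 = w` and `wt i`
obtained by integrating `wt (i-1)` against `wstep i` over the strikes excluded from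
`[K1 (i-1), K2 (i-1)]`), the target decomposes over the bounded strike intervals plus a
final integral over all strikes at the shortest maturity. All functions are nonnegative
and all iterated integrals are finite. -/
theorem iterated_spanning
    (n : ℕ) (hn : 2 ≤ n)
    (Cu : ℕ → ℝ → ℝ) (CT : ℝ) (w : ℝ → ℝ)
    (wstep : ℕ → ℝ → ℝ → ℝ) (K1 K2 : ℕ → ℝ) (wt : ℕ → ℝ → ℝ)
    (hK : ∀ i, 1 ≤ i → i ≤ n - 1 → 0 < K1 i ∧ K1 i ≤ K2 i)
    (hCu_nonneg : ∀ i k, 0 ≤ Cu i k)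
    (hw_nonneg : ∀ k, 0 ≤ w k)
    (hwstep_nonneg : ∀ i k' k, 0 ≤ wstep i k' k)
    (hCu_meas : ∀ i, Measurable (Cu i))
    (hw_meas : Measurable w)
    (hwstep_meas : ∀ i, Measurable (fun p : ℝ × ℝ => wstep i p.1 p.2))
    (hwt_meas : ∀ i, Measurable (wt i))
    -- single-step spanning relations
    (hspan : ∀ i, 2 ≤ i → i ≤ n → ∀ k > 0,
      Cu (i - 1) k = ∫ k' in Ioi (0 : ℝ), wstep i k' k * Cu i k')
    (hCT : CT = ∫ k in Ioi (0 : ℝ), w k * Cu 1 k)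
    -- modified weights
    (hwt1 : wt 1 = w)
    (hwt : ∀ i, 2 ≤ i → i ≤ n → ∀ k, wt i k =
      (∫ k' in Ioo (0 : ℝ) (K1 (i - 1)), wt (i - 1) k' * wstep i k k') +
        ∫ k' in Ioi (K2 (i - 1)), wt (i - 1) k' * wstep i k k')
    -- finiteness of all iterated integrals
    (hint : ∀ i, 1 ≤ i → i ≤ n →
      IntegrableOn (fun k => wt i k * Cu i k) (Ioi (0 : ℝ)))
    (hint2 : ∀ i, 2 ≤ i → i ≤ n →
      IntegrableOn (fun p : ℝ × ℝ => wt (i - 1) p.1 * wstep i p.2 p.1 * Cu i p.2)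
        ((Ioi (0 : ℝ)) ×ˢ (Ioi (0 : ℝ)))) :
    CT = (∑ i ∈ Finset.Icc 1 (n - 1), ∫ k in Ioc (K1 i) (K2 i), wt i k * Cu i k) +
      ∫ k in Ioi (0 : ℝ), wt n k * Cu n k := by
  suffices H : ∀ m, 1 ≤ m → m ≤ n →
      CT = (∑ i ∈ Finset.Icc 1 (m - 1), ∫ k in Ioc (K1 i) (K2 i), wt i k * Cu i k) +
        ∫ k in Ioi (0 : ℝ), wt m k * Cu m k by
    exact H n (by omega) le_rfl
  intro m hm
  induction m, hm using Nat.le_induction with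
  | base =>
    intro _
    rw [show Finset.Icc 1 (1 - 1) = ∅ by decide, Finset.sum_empty, zero_add, hwt1]
    exact hCT
  | succ m hm ih =>
    intro hmn
    have hmn' : m ≤ n := le_trans (Nat.le_succ m) hmn
    obtain ⟨ha, hab⟩ := hK m hm (by omega)
    have h2 : 2 ≤ m + 1 := by omega
    have hsp := hspan (m + 1) h2 hmn
    have hI2 := hint2 (m + 1) h2 hmn
    simp only [Nat.add_sub_cancel] at hsp hI2
    -- key swapping identities on the two excluded regions
    have key1 := span_swap (Ioo 0 (K1 m)) measurableSet_Ioo Ioo_subset_Ioi_self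
      (wt m) (Cu (m + 1)) (Cu m) (wstep (m + 1)) hI2
      (fun k hk => hsp k hk.1)
    have key2 := span_swap (Ioi (K2 m)) measurableSet_Ioi
      (Ioi_subset_Ioi (lt_of_lt_of_le ha hab).le)
      (wt m) (Cu (m + 1)) (Cu m) (wstep (m + 1)) hI2
      (fun k hk => hsp k (lt_trans (lt_of_lt_of_le ha hab) hk))
    -- rewrite the new integral using the modified-weight definition
    have hnew : (∫ k in Ioi (0 : ℝ), wt (m + 1) k * Cu (m + 1) k)
        = (∫ k in Ioi (0 : ℝ),
            (∫ k' in Ioo (0 : ℝ) (K1 m), wt m k' * wstep (m + 1) k k') * Cu (m + 1) k)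
          + ∫ k in Ioi (0 : ℝ),
            (∫ k' in Ioi (K2 m), wt m k' * wstep (m + 1) k k') * Cu (m + 1) k := by
      rw [← integral_add key1.2 key2.2]
      refine setIntegral_congr_fun measurableSet_Ioi fun k _ => ?_
      have := hwt (m + 1) h2 hmn k
      simp only [Nat.add_sub_cancel] at this
      rw [this, add_mul]
    have hsplit := split3 (K1 m) (K2 m) ha hab
      (fun k => wt m k * Cu m k) (hint m hm hmn')
    have hstep : (∫ k in Ioi (0 : ℝ), wt m k * Cu m k)
        = (∫ k in Ioc (K1 m) (K2 m), wt m k * Cu m k)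
          + ∫ k in Ioi (0 : ℝ), wt (m + 1) k * Cu (m + 1) k := by
      rw [hsplit, hnew, ← key1.1, ← key2.1]; ring
    -- assemble
    obtain ⟨p, rfl⟩ : ∃ p, m = p + 1 := ⟨m - 1, by omega⟩
    have hih := ih hmn'
    simp only [Nat.add_sub_cancel] at hih ⊢
    rw [hih, hstep, Finset.sum_Icc_succ_top (by omega : 1 ≤ p + 1)]
    ring
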